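/- Let I, J be intervals in a poset P such that I ∩ J is a nonempty interval. Then there exists a nonzero morphism of P-modules f : C(I) → C(J) if and only if I ∩ J is (I,J)-valid. -/

import Mathlib

open CategoryTheory
open scoped Classical ENNReal NNReal

set_option linter.unusedSectionVars false
set_option linter.unusedVariables false

/-! ## Posets, intervals, flows -/

variable {P : Type} [PartialOrder P]

/-- A subset of a poset is poset-convex if it contains every point between two of its points. -/
def PosetConvex (I : Set P) : Prop :=
  ∀ ⦃p q r : P⦄, p ∈ I → q ∈ I → p ≤ r → r ≤ q → r ∈ I

/-- A subset of a poset is poset-connected if any two of its points are joined by a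
zigzag path inside the subset. -/
def PosetConnected (I : Set P) : Prop :=
  ∀ p ∈ I, ∀ q ∈ I,
    Relation.ReflTransGen (fun a b => b ∈ I ∧ (a ≤ b ∨ b ≤ a)) p q

/-- An interval in a poset is a poset-convex and poset-connected subset. -/
def IsInterval (I : Set P) : Prop := PosetConvex I ∧ PosetConnected I

/-- `Q` is a poset-connected component of `U`: a poset-connected subset of `U`, maximal with
respect to inclusion among poset-connected subsets of `U`. -/
def IsPosetComponent (U Q : Set P) : Prop :=
  Q ⊆ U ∧ PosetConnected Q ∧
    ∀ Q' : Set P, Q' ⊆ U → PosetConnected Q' → Q ⊆ Q' → Q' = Q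

/-- A subset `Q` of `I ∩ J` is `(I,J)`-valid. -/
def IsValid (I J Q : Set P) : Prop :=
  ∀ p ∈ Q, (∀ q ∈ I, q ≤ p → q ∈ J) ∧ (∀ r ∈ J, p ≤ r → r ∈ I)

/-- An `ℝ`-flow on a poset. -/
structure RFlow (P : Type) [PartialOrder P] where
  Ω : ℝ → P → P
  mono : ∀ t : ℝ, Monotone (Ω t)
  mono_param : ∀ {t s : ℝ}, t ≤ s → ∀ p : P, Ω t p ≤ Ω s p
  add : ∀ t s : ℝ, ∀ p : P, Ω (t + s) p = Ω t (Ω s p)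
  zero : ∀ p : P, Ω 0 p = p

/-- The `t`-shift `I(t)` of a subset of a poset with an `ℝ`-flow. -/
def RFlow.shiftSet (Φ : RFlow P) (I : Set P) (t : ℝ) : Set P := {p : P | Φ.Ω t p ∈ I}

lemma RFlow.self_le (Φ : RFlow P) {t : ℝ} (ht : 0 ≤ t) (p : P) : p ≤ Φ.Ω t p := by
  have h := Φ.mono_param ht p
  rwa [Φ.zero] at h

lemma RFlow.self_le_twice (Φ : RFlow P) {t : ℝ} (ht : 0 ≤ t) (p : P) :
    p ≤ Φ.Ω t (Φ.Ω t p) :=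
  (Φ.self_le ht p).trans (Φ.self_le ht _)

lemma RFlow.omega_neg_omega (Φ : RFlow P) (t : ℝ) (p : P) : Φ.Ω (-t) (Φ.Ω t p) = p := by
  have h := Φ.add (-t) t p
  rw [neg_add_cancel, Φ.zero] at h
  exact h.symm

lemma RFlow.omega_omega_neg (Φ : RFlow P) (t : ℝ) (p : P) : Φ.Ω t (Φ.Ω (-t) p) = p := by
  have h := Φ.add t (-t) p
  rw [add_neg_cancel, Φ.zero] at h
  exact h.symm

lemma RFlow.posetConvex_shiftSet (Φ : RFlow P) {I : Set P} (hI : PosetConvex I) (t : ℝ) :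
    PosetConvex (Φ.shiftSet I t) := by
  intro p q r hp hq hpr hrq
  exact hI hp hq (Φ.mono t hpr) (Φ.mono t hrq)

lemma RFlow.posetConnected_shiftSet (Φ : RFlow P) {I : Set P} (hI : PosetConnected I) (t : ℝ) :
    PosetConnected (Φ.shiftSet I t) := by
  intro p hp q hq
  have h := hI _ hp _ hq
  have h2 := Relation.ReflTransGen.lift
    (p := fun a b : P => b ∈ Φ.shiftSet I t ∧ (a ≤ b ∨ b ≤ a)) (fun x : P => Φ.Ω (-t) x)
    (fun a b hab => ⟨show Φ.Ω t (Φ.Ω (-t) b) ∈ I by rw [Φ.omega_omega_neg]; exact hab.1,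
      hab.2.imp (fun h' => Φ.mono (-t) h') (fun h' => Φ.mono (-t) h')⟩) _ _ h
  simpa only [Function.onFun, Φ.omega_neg_omega] using h2

lemma RFlow.isInterval_shiftSet (Φ : RFlow P) {I : Set P} (hI : IsInterval I) (t : ℝ) :
    IsInterval (Φ.shiftSet I t) :=
  ⟨Φ.posetConvex_shiftSet hI.1 t, Φ.posetConnected_shiftSet hI.2 t⟩

lemma RFlow.shiftSet_nonempty (Φ : RFlow P) {I : Set P} (hI : I.Nonempty) (t : ℝ) :
    (Φ.shiftSet I t).Nonempty := by
  obtain ⟨x, hx⟩ := hI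
  exact ⟨Φ.Ω (-t) x, show Φ.Ω t (Φ.Ω (-t) x) ∈ I by rw [Φ.omega_omega_neg]; exact hx⟩

/-! ## Characteristic (interval) persistence modules -/

variable (K : Type) [Field K]

/-- The pointwise value of the characteristic module of `I`, as a submodule of `K`. -/
noncomputable def charSub (I : Set P) (p : P) : Submodule K K :=
  if p ∈ I then ⊤ else ⊥

lemma charSub_eq_top {I : Set P} {p : P} (hp : p ∈ I) : charSub K I p = ⊤ := if_pos hp

lemma charSub_eq_bot {I : Set P} {p : P} (hp : p ∉ I) : charSub K I p = ⊥ := if_neg hp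

lemma charElt_eq_zero {I : Set P} {p : P} (hp : p ∉ I) (x : ↥(charSub K I p)) : x = 0 := by
  exact Subtype.ext ((Submodule.eq_bot_iff _).mp (charSub_eq_bot K hp) (x : K) x.2)

/-- The structure maps of the characteristic module of `I`. -/
noncomputable def charMap (I : Set P) (p q : P) :
    ↥(charSub K I p) →ₗ[K] ↥(charSub K I q) :=
  if h : p ∈ I ∧ q ∈ I then
    { toFun := fun x => ⟨(x : K), by rw [charSub_eq_top K h.2]; exact Submodule.mem_top⟩
      map_add' := fun x y => rfl
      map_smul' := fun c x => rfl }
  else 0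

lemma charMap_id (I : Set P) (p : P) : charMap K I p p = LinearMap.id := by
  by_cases hp : p ∈ I
  · simp only [charMap, dif_pos (And.intro hp hp)]
    rfl
  · ext x
    rw [charElt_eq_zero K hp x]
    simp

lemma charMap_comp {I : Set P} (hI : PosetConvex I) {p q r : P} (hpq : p ≤ q) (hqr : q ≤ r) :
    (charMap K I q r).comp (charMap K I p q) = charMap K I p r := by
  by_cases hp : p ∈ I
  · by_cases hr : r ∈ I
    · have hq : q ∈ I := hI hp hr hpq hqr
      ext x
      simp only [charMap, dif_pos (And.intro hp hq), dif_pos (And.intro hq hr),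
        dif_pos (And.intro hp hr), LinearMap.comp_apply, LinearMap.coe_mk, AddHom.coe_mk]
    · ext x
      exact congrArg Subtype.val
        ((charElt_eq_zero K hr ((charMap K I q r).comp (charMap K I p q) x)).trans
          (charElt_eq_zero K hr (charMap K I p r x)).symm)
  · ext x
    rw [charElt_eq_zero K hp x]
    simp

/-- The characteristic persistence module `C(I)` of a poset-convex subset `I`. -/
noncomputable def charMod (I : Set P) (hI : PosetConvex I) : P ⥤ ModuleCat K where
  obj p := ModuleCat.of K ↥(charSub K I p)
  map {p q} h := ModuleCat.ofHom (charMap K I p q)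
  map_id p := by rw [charMap_id K I p]; rfl
  map_comp {p q r} h1 h2 := by
    rw [← ModuleCat.ofHom_comp, charMap_comp K hI (leOfHom h1) (leOfHom h2)]

/-- The zero persistence module, realized as the characteristic module of the empty interval. -/
noncomputable def zeroPMod : P ⥤ ModuleCat K :=
  charMod K (∅ : Set P) (fun _ _ _ hp _ _ _ => absurd hp (Set.notMem_empty _))

/-! ## Barcodes and interval-decomposable modules -/

/-- A barcode over a poset: a multiset of nonempty intervals, encoded as an indexed family. -/
structure Barcode (P : Type) [PartialOrder P] where
  ι : Type
  B : ι → Set P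
  interval : ∀ a : ι, IsInterval (B a)
  nonempty : ∀ a : ι, (B a).Nonempty

/-- The interval-decomposable module `⊕_{a} C(B a)` associated to a barcode. -/
noncomputable def bcMod (D : Barcode P) : P ⥤ ModuleCat K where
  obj p := ModuleCat.of K (Π₀ a : D.ι, ↥(charSub K (D.B a) p))
  map {p q} h := ModuleCat.ofHom (DFinsupp.mapRange.linearMap (fun a => charMap K (D.B a) p q))
  map_id p := by
    have h : (fun a : D.ι => charMap K (D.B a) p p)
        = fun a : D.ι => (LinearMap.id : ↥(charSub K (D.B a) p) →ₗ[K] ↥(charSub K (D.B a) p)) := by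
      funext a; exact charMap_id K (D.B a) p
    show ModuleCat.ofHom (DFinsupp.mapRange.linearMap (fun a => charMap K (D.B a) p p)) = 𝟙 _
    rw [h, DFinsupp.mapRange.linearMap_id]
    rfl
  map_comp {p q r} h1 h2 := by
    have h : (fun a : D.ι => charMap K (D.B a) p r)
        = fun a : D.ι => (charMap K (D.B a) q r).comp (charMap K (D.B a) p q) := by
      funext a
      exact (charMap_comp K (D.interval a).1 (leOfHom h1) (leOfHom h2)).symm
    show ModuleCat.ofHom (DFinsupp.mapRange.linearMap (fun a => charMap K (D.B a) p r)) = _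
    rw [h, DFinsupp.mapRange.linearMap_comp]
    rfl

/-- `M` is interval-decomposable with barcode `D`. -/
def IsDecompositionOf (D : Barcode P) (M : P ⥤ ModuleCat K) : Prop :=
  Nonempty (M ≅ bcMod K D)

/-- The shift of a barcode along a flow. -/
noncomputable def Barcode.shift (D : Barcode P) (Φ : RFlow P) (t : ℝ) : Barcode P where
  ι := D.ι
  B a := Φ.shiftSet (D.B a) t
  interval a := Φ.isInterval_shiftSet (D.interval a) t
  nonempty a := Φ.shiftSet_nonempty (D.nonempty a) t

/-! ## Shifts of modules, interleavings, distances -/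

/-- The shift `M(t)` of a persistence module along a flow. -/
noncomputable def Pshift (Φ : RFlow P) (t : ℝ) (M : P ⥤ ModuleCat K) : P ⥤ ModuleCat K :=
  (Φ.mono t).functor ⋙ M

/-- The ordered pair `(M, N)` is left `ε`-interleaved. -/
noncomputable def LeftInterleaved (Φ : RFlow P) {ε : ℝ} (hε : 0 ≤ ε)
    (M N : P ⥤ ModuleCat K) : Prop :=
  ∃ (f : M ⟶ Pshift K Φ ε N) (g : N ⟶ Pshift K Φ ε M),
    ∀ p : P, f.app p ≫ g.app (Φ.Ω ε p) = M.map (homOfLE (Φ.self_le_twice hε p))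

/-- `M` and `N` are `ε`-interleaved. -/
noncomputable def Interleaved (Φ : RFlow P) {ε : ℝ} (hε : 0 ≤ ε)
    (M N : P ⥤ ModuleCat K) : Prop :=
  ∃ (f : M ⟶ Pshift K Φ ε N) (g : N ⟶ Pshift K Φ ε M),
    (∀ p : P, f.app p ≫ g.app (Φ.Ω ε p) = M.map (homOfLE (Φ.self_le_twice hε p))) ∧
    (∀ p : P, g.app p ≫ f.app (Φ.Ω ε p) = N.map (homOfLE (Φ.self_le_twice hε p)))

/-- The interleaving distance between two persistence modules. -/
noncomputable def dI (Φ : RFlow P) (M N : P ⥤ ModuleCat K) : ℝ≥0∞ :=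
  ⨅ (ε : NNReal) (_ : Interleaved K Φ ε.coe_nonneg M N), (ε : ℝ≥0∞)

/-- An interval `I` is `t`-trivial if the transition morphism `C(I) → C(I(t))` vanishes. -/
noncomputable def IsTrivialIv (Φ : RFlow P) {t : ℝ} (ht : 0 ≤ t)
    (I : Set P) (hI : PosetConvex I) : Prop :=
  ∀ p : P, (charMod K I hI).map (homOfLE (Φ.self_le ht p)) = 0

/-- An `ε`-correspondence between two barcodes. -/
noncomputable def IsCorrespondence (Φ : RFlow P) {ε : ℝ} (hε : 0 ≤ ε)
    (DM DN : Barcode P) (σ : Set (DM.ι × DN.ι)) : Prop :=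
  (∀ ab ∈ σ, Interleaved K Φ hε
      (charMod K (DM.B ab.1) (DM.interval ab.1).1) (charMod K (DN.B ab.2) (DN.interval ab.2).1)) ∧
  (∀ a : DM.ι, (∀ b : DN.ι, (a, b) ∉ σ) →
      Interleaved K Φ hε (charMod K (DM.B a) (DM.interval a).1) (zeroPMod K)) ∧
  (∀ b : DN.ι, (∀ a : DM.ι, (a, b) ∉ σ) →
      Interleaved K Φ hε (zeroPMod K) (charMod K (DN.B b) (DN.interval b).1))

/-- An `ε`-matching between two barcodes. -/
noncomputable def IsMatching (Φ : RFlow P) {ε : ℝ} (hε : 0 ≤ ε)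
    (DM DN : Barcode P) (σ : Set (DM.ι × DN.ι)) : Prop :=
  IsCorrespondence K Φ hε DM DN σ ∧
  (∀ a b b', (a, b) ∈ σ → (a, b') ∈ σ → b = b') ∧
  (∀ a a' b, (a, b) ∈ σ → (a', b) ∈ σ → a = a')

/-- The Hausdorff distance between (modules with) barcodes `DM`, `DN`. -/
noncomputable def dH (Φ : RFlow P) (DM DN : Barcode P) : ℝ≥0∞ :=
  ⨅ (ε : NNReal) (_ : ∃ σ : Set (DM.ι × DN.ι), IsCorrespondence K Φ ε.coe_nonneg DM DN σ),
    (ε : ℝ≥0∞)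

/-- The bottleneck distance between (modules with) barcodes `DM`, `DN`. -/
noncomputable def dB (Φ : RFlow P) (DM DN : Barcode P) : ℝ≥0∞ :=
  ⨅ (ε : NNReal) (_ : ∃ σ : Set (DM.ι × DN.ι), IsMatching K Φ ε.coe_nonneg DM DN σ),
    (ε : ℝ≥0∞)



/-! ## Auxiliary lemmas for Statement 8 -/

lemma charSub_one_mem {I : Set P} {p : P} (hp : p ∈ I) : (1 : K) ∈ charSub K I p := by
  rw [charSub_eq_top K hp]; trivial

/-- The canonical generator of `C(I)_p` for `p ∈ I`. -/
noncomputable def oneEl {I : Set P} {p : P} (hp : p ∈ I) : ↥(charSub K I p) :=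
  ⟨1, charSub_one_mem K hp⟩

lemma charMap_apply_val {I : Set P} {p q : P} (hp : p ∈ I) (hq : q ∈ I)
    (x : ↥(charSub K I p)) : (charMap K I p q x).val = x.val := by
  unfold charMap
  rw [dif_pos (And.intro hp hq)]
  rfl

lemma charMap_eq_zero {I : Set P} {p q : P} (h : ¬ (p ∈ I ∧ q ∈ I)) :
    charMap K I p q = 0 := dif_neg h

/-- The canonical cross map `C(I)_p → C(J)_p`. -/
noncomputable def crossMap (I J : Set P) (p : P) :
    ↥(charSub K I p) →ₗ[K] ↥(charSub K J p) :=
  if h : p ∈ I ∩ J then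
    { toFun := fun x => ⟨(x : K), by rw [charSub_eq_top K h.2]; trivial⟩
      map_add' := fun _ _ => rfl
      map_smul' := fun _ _ => rfl }
  else 0

lemma crossMap_apply_val {I J : Set P} {p : P} (h : p ∈ I ∩ J) (x : ↥(charSub K I p)) :
    (crossMap K I J p x).val = x.val := by
  unfold crossMap
  rw [dif_pos h]
  rfl

lemma crossMap_eq_zero {I J : Set P} {p : P} (h : p ∉ I ∩ J) :
    crossMap K I J p = 0 := dif_neg h

/-- if `I ∩ J` is a nonempty interval, then a nonzero morphism
`C(I) → C(J)` exists iff `I ∩ J` is `(I,J)`-valid. -/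
theorem nonzero_morphism_iff_valid (I J : Set P) (hI : IsInterval I) (hJ : IsInterval J)
    (hIJ : IsInterval (I ∩ J)) (hne : (I ∩ J).Nonempty) :
    (∃ f : charMod K I hI.1 ⟶ charMod K J hJ.1, f ≠ 0) ↔ IsValid I J (I ∩ J) := by
  classical
  constructor
  · rintro ⟨f, hf⟩
    have hex : ∃ p : P, f.app p ≠ 0 := by
      by_contra hall
      push_neg at hall
      exact hf (by ext p : 2; rw [hall p]; rfl)
    obtain ⟨p₀, hp₀⟩ := hex
    have hp₀I : p₀ ∈ I := by
      by_contra h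
      exact hp₀ (by ext x; rw [charElt_eq_zero K h x]; exact LinearMap.map_zero _)
    have hp₀J : p₀ ∈ J := by
      by_contra h
      refine hp₀ ?_
      ext x
      have h2 := charElt_eq_zero K h (f.app p₀ x)
      exact h2
    have hnat : ∀ {p q : P} (h : p ≤ q) (x : ↥(charSub K I p)),
        f.app q (charMap K I p q x) = charMap K J p q (f.app p x) := by
      intro p q h x
      exact congrArg (fun m => ModuleCat.Hom.hom m x) (f.naturality (homOfLE h))
    -- the value of f at p₀ on the generator is nonzero
    have hval₀ : Subtype.val (f.app p₀ (oneEl K hp₀I)) ≠ 0 := by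
      intro h0
      have hgen : f.app p₀ (oneEl K hp₀I) = 0 := Subtype.ext h0
      refine hp₀ ?_
      have hz : ∀ x : ↥(charSub K I p₀), f.app p₀ x = 0 := by
        intro x
        have hx : x = x.val • oneEl K hp₀I := Subtype.ext (by simp [oneEl])
        rw [hx]
        exact ((f.app p₀).hom.map_smul x.val (oneEl K hp₀I)).trans
          ((congrArg (fun y => x.val • y) hgen).trans (smul_zero _))
      ext x
      exact hz x
    -- step lemma: the value is constant along comparabilities within I ∩ J
    have hstep : ∀ {p q : P} (hp : p ∈ I ∩ J) (hq : q ∈ I ∩ J), p ≤ q →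
        Subtype.val (f.app p (oneEl K hp.1)) = Subtype.val (f.app q (oneEl K hq.1)) := by
      intro p q hp hq hpq
      have h1 := hnat hpq (oneEl K hp.1)
      have h2 : charMap K I p q (oneEl K hp.1) = oneEl K hq.1 := by
        apply Subtype.ext
        rw [charMap_apply_val K hp.1 hq.1]
        rfl
      rw [h2] at h1
      have h3 := congrArg Subtype.val h1
      exact (h3.trans (charMap_apply_val K hp.2 hq.2 _)).symm
    -- the value is nonzero on all of I ∩ J
    have hallval : ∀ p (hp : p ∈ I ∩ J), Subtype.val (f.app p (oneEl K hp.1)) ≠ 0 := by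
      intro p hp
      have key : ∀ q, Relation.ReflTransGen
          (fun a b => b ∈ I ∩ J ∧ (a ≤ b ∨ b ≤ a)) p₀ q →
          ∀ hq : q ∈ I ∩ J,
            Subtype.val (f.app q (oneEl K hq.1))
              = Subtype.val (f.app p₀ (oneEl K hp₀I)) := by
        intro q hq
        induction hq with
        | refl => intro _; rfl
        | @tail b c hab hbc ih =>
          intro hc
          have hb : b ∈ I ∩ J := by
            rcases hab.cases_tail with h | ⟨c', _, hc'⟩
            · rw [h]; exact ⟨hp₀I, hp₀J⟩
            · exact hc'.1
          rcases hbc.2 with h | h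
          · exact (hstep hb hc h).symm.trans (ih hb)
          · exact (hstep hc hb h).trans (ih hb)
      rw [key p (hIJ.2 p₀ ⟨hp₀I, hp₀J⟩ p hp) hp]
      exact hval₀
    -- conclude validity
    intro p hp
    constructor
    · intro q hqI hqp
      by_contra hqJ
      have h1 := hnat hqp (oneEl K hqI)
      have h2 : f.app q (oneEl K hqI) = 0 := charElt_eq_zero K hqJ _
      rw [h2] at h1
      replace h1 := h1.trans (LinearMap.map_zero (charMap K J q p))
      have h3 : charMap K I q p (oneEl K hqI) = oneEl K hp.1 := by
        apply Subtype.ext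
        rw [charMap_apply_val K hqI hp.1]
        rfl
      rw [h3] at h1
      exact hallval p hp (congrArg Subtype.val h1)
    · intro r hrJ hpr
      by_contra hrI
      have h1 := hnat hpr (oneEl K hp.1)
      have h2 : charMap K I p r (oneEl K hp.1) = 0 := charElt_eq_zero K hrI _
      rw [h2] at h1
      have hz : f.app r (0 : ↥(charSub K I r)) = 0 := LinearMap.map_zero _
      rw [hz] at h1
      have h3 := congrArg Subtype.val h1
      exact hallval p hp ((h3.trans (charMap_apply_val K hp.2 hrJ _)).symm)
  · intro hval
    refine ⟨{ app := fun p => ModuleCat.ofHom (crossMap K I J p), naturality := ?_ }, ?_⟩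
    · intro p q h
      have hpq : p ≤ q := leOfHom h
      refine ModuleCat.hom_ext (LinearMap.ext fun (x : ↥(charSub K I p)) => ?_)
      change (crossMap K I J q) ((charMap K I p q) x)
        = (charMap K J p q) ((crossMap K I J p) x)
      by_cases hq : q ∈ I ∩ J
      · by_cases hp : p ∈ I ∩ J
        · apply Subtype.ext
          rw [crossMap_apply_val K hq, charMap_apply_val K hp.1 hq.1,
            charMap_apply_val K hp.2 hq.2, crossMap_apply_val K hp]
        · have hpI : p ∉ I := fun hpI => hp ⟨hpI, (hval q hq).1 p hpI hpq⟩
          rw [charElt_eq_zero K hpI x]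
          simp
      · by_cases hp : p ∈ I ∩ J
        · have hqJ : q ∉ J := fun hqJ => hq ⟨(hval p hp).2 q hqJ hpq, hqJ⟩
          rw [crossMap_eq_zero K hq, charMap_eq_zero K (fun h' => hqJ h'.2)]
          simp
        · rw [crossMap_eq_zero K hq, crossMap_eq_zero K hp]
          simp
    · intro h0
      obtain ⟨p, hp⟩ := hne
      have h1 : crossMap K I J p = 0 := by
        have h2 := congrArg
          (fun (g : charMod K I hI.1 ⟶ charMod K J hJ.1) => g.app p) h0
        exact congrArg ModuleCat.Hom.hom h2
      have h2 := congrArg Subtype.val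
        (congrArg (fun (m : ↥(charSub K I p) →ₗ[K] ↥(charSub K J p)) =>
          m (oneEl K hp.1)) h1)
      rw [crossMap_apply_val K hp] at h2
      exact one_ne_zero h2
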